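/- Assuming the cyclic reduction relation ↬ is terminating, ↬ is confluent (up to cyclic conjugacy) if and only if it is locally confluent (up to cyclic conjugacy). -/

import Mathlib

/-- `u` and `v` are cyclic conjugates in the free monoid `Σ*`. -/
def CycConj {α : Type*} (u v : List α) : Prop :=
  ∃ x y : List α, u = x ++ y ∧ v = y ++ x

/-- One rewriting step of the rewriting system `R`. -/
def Step {α : Type*} (R : List α → List α → Prop) (u v : List α) : Prop :=
  ∃ l r x y : List α, R l r ∧ u = x ++ l ++ y ∧ v = x ++ r ++ y

/-- One cyclic reduction step: some cyclic conjugate of `u` rewrites to `v`. -/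
def CycStep {α : Type*} (R : List α → List α → Prop) (u v : List α) : Prop :=
  ∃ w : List α, CycConj u w ∧ Step R w v

/-- `u` is cyclically irreducible: `u` and all its cyclic conjugates are irreducible. -/
def CycIrred {α : Type*} (R : List α → List α → Prop) (u : List α) : Prop :=
  ∀ w : List α, CycConj u w → ∀ v : List α, ¬ Step R w v

/-- Equality in the monoid presented by the rewriting system `R`. -/
def MEq {α : Type*} (R : List α → List α → Prop) : List α → List α → Prop :=
  Relation.EqvGen (Step R)

/-- `u ≡_M v` : `u` and `v` are left and right conjugates in the monoid presented by `R`. -/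
def MConj {α : Type*} (R : List α → List α → Prop) (u v : List α) : Prop :=
  ∃ x y : List α, MEq R (u ++ x) (x ++ v) ∧ MEq R (y ++ u) (v ++ y)

lemma cycConj_refl {α : Type*} (u : List α) : CycConj u u :=
  ⟨u, [], by simp, by simp⟩

lemma cycConj_symm {α : Type*} {u v : List α} (h : CycConj u v) : CycConj v u := by
  obtain ⟨x, y, h1, h2⟩ := h
  exact ⟨y, x, h2, h1⟩

lemma cycConj_trans {α : Type*} {u v w : List α} (h1 : CycConj u v) (h2 : CycConj v w) :
    CycConj u w := by
  obtain ⟨x, y, rfl, rfl⟩ := h1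
  obtain ⟨p, q, hpq, rfl⟩ := h2
  rcases List.append_eq_append_iff.1 hpq with ⟨a, ha1, ha2⟩ | ⟨c, hc1, hc2⟩
  · subst ha1; subst ha2
    exact ⟨a, q ++ y, by simp, by simp⟩
  · subst hc1; subst hc2
    exact ⟨x ++ p, c, by simp, by simp⟩

lemma cycStep_of_conj {α : Type*} {R : List α → List α → Prop} {u u' v : List α}
    (h : CycConj u u') (hs : CycStep R u v) : CycStep R u' v := by
  obtain ⟨w, hc, hst⟩ := hs
  exact ⟨w, cycConj_trans (cycConj_symm h) hc, hst⟩

lemma conj_star {α : Type*} {R : List α → List α → Prop} {z z' a : List α}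
    (h : CycConj z z') (hs : Relation.ReflTransGen (CycStep R) z a) :
    ∃ b, Relation.ReflTransGen (CycStep R) z' b ∧ CycConj a b := by
  rcases Relation.ReflTransGen.cases_head hs with rfl | ⟨t, hzt, hta⟩
  · exact ⟨z', Relation.ReflTransGen.refl, h⟩
  · exact ⟨a, Relation.ReflTransGen.head (cycStep_of_conj h hzt) hta, cycConj_refl a⟩

/-- for a terminating cyclic reduction relation, confluence up to
cyclic conjugacy is equivalent to local confluence up to cyclic conjugacy. -/
theorem cyc_newman {α : Type*} (R : List α → List α → Prop)
    (hterm : ¬ ∃ g : ℕ → List α, ∀ n : ℕ, CycStep R (g n) (g (n + 1))) :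
    (∀ w u v : List α, Relation.ReflTransGen (CycStep R) w u →
      Relation.ReflTransGen (CycStep R) w v →
      ∃ z z' : List α, CycConj z z' ∧ Relation.ReflTransGen (CycStep R) u z ∧
        Relation.ReflTransGen (CycStep R) v z')
    ↔
    (∀ w u v : List α, CycStep R w u → CycStep R w v →
      ∃ z z' : List α, CycConj z z' ∧ Relation.ReflTransGen (CycStep R) u z ∧
        Relation.ReflTransGen (CycStep R) v z') := by
  constructor
  · intro hconf w u v hu hv
    exact hconf w u v (Relation.ReflTransGen.single hu) (Relation.ReflTransGen.single hv)
  · intro hloc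
    have hwf : WellFounded (fun a b : List α => CycStep R b a) := by
      constructor
      intro a
      by_contra ha
      have key : ∀ x : { b : List α // ¬Acc (fun a b : List α => CycStep R b a) b },
          ∃ y : { b : List α // ¬Acc (fun a b : List α => CycStep R b a) b },
            CycStep R x.1 y.1 := by
        rintro ⟨x, hx⟩
        obtain ⟨w, hw1, hw2⟩ := exists_not_acc_lt_of_not_acc hx
        exact ⟨⟨w, hw1⟩, hw2⟩
      choose f hf using key
      refine hterm ⟨fun n => (f^[n] ⟨a, ha⟩).1, fun n => ?_⟩
      show CycStep R (f^[n] ⟨a, ha⟩).1 (f^[n + 1] ⟨a, ha⟩).1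
      rw [Function.iterate_succ']
      exact hf _
    intro w
    induction w using hwf.induction with
    | _ w ih =>
      intro u v hu hv
      rcases Relation.ReflTransGen.cases_head hu with rfl | ⟨u₁, hwu₁, hu₁u⟩
      · exact ⟨v, v, cycConj_refl v, hv, Relation.ReflTransGen.refl⟩
      rcases Relation.ReflTransGen.cases_head hv with rfl | ⟨v₁, hwv₁, hv₁v⟩
      · exact ⟨u, u, cycConj_refl u, Relation.ReflTransGen.refl,
          Relation.ReflTransGen.head hwu₁ hu₁u⟩
      obtain ⟨z, z', hzz', hu₁z, hv₁z'⟩ := hloc w u₁ v₁ hwu₁ hwv₁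
      obtain ⟨a, a', haa', hua, hza'⟩ := ih u₁ hwu₁ u z hu₁u hu₁z
      obtain ⟨b, hz'b, ha'b⟩ := conj_star hzz' hza'
      obtain ⟨c, c', hcc', hvc, hbc'⟩ := ih v₁ hwv₁ v b hv₁v (hv₁z'.trans hz'b)
      obtain ⟨d, had, hc'd⟩ := conj_star (cycConj_symm (cycConj_trans haa' ha'b)) hbc'
      exact ⟨d, c, cycConj_trans (cycConj_symm hc'd) (cycConj_symm hcc'), hua.trans had, hvc⟩
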